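/- The map M ↦ 𝒮(M) = M ⊕ M̄ is injective on isomorphism classes: for simple 𝒟-modules M₁ and M₂, the 𝒮𝒟-modules 𝒮(M₁) and 𝒮(M₂) are isomorphic if and only if M₁ ≅ M₂ as 𝒟-modules. -/

import Mathlib

/-- The functor `𝒮` is injective on isomorphism classes: for simple `𝒟`-modules `M₁, M₂`,
the `𝒮𝒟`-modules `𝒮(M₁) = M₁ ⊕ M̄₁` and `𝒮(M₂) = M₂ ⊕ M̄₂` (with `𝒟` acting diagonally,
`θ·(v,w) = (0,v)`, `∂_θ·(v,w) = (w,0)`) are isomorphic iff `M₁ ≅ M₂` as `𝒟`-modules. -/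
theorem stmt14 {M₁ M₂ : Type*} [AddCommGroup M₁] [Module ℂ M₁] [AddCommGroup M₂] [Module ℂ M₂]
    (T₁ Ti₁ D₁ : M₁ →ₗ[ℂ] M₁) (T₂ Ti₂ D₂ : M₂ →ₗ[ℂ] M₂)
    (h1 : D₁.comp T₁ - T₁.comp D₁ = LinearMap.id)
    (h2 : T₁.comp Ti₁ = LinearMap.id) (h3 : Ti₁.comp T₁ = LinearMap.id)
    (h1' : D₂.comp T₂ - T₂.comp D₂ = LinearMap.id)
    (h2' : T₂.comp Ti₂ = LinearMap.id) (h3' : Ti₂.comp T₂ = LinearMap.id)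
    (hs₁ : ∀ N : Submodule ℂ M₁,
      (∀ v ∈ N, T₁ v ∈ N) → (∀ v ∈ N, Ti₁ v ∈ N) → (∀ v ∈ N, D₁ v ∈ N) → N = ⊥ ∨ N = ⊤)
    (hs₂ : ∀ N : Submodule ℂ M₂,
      (∀ v ∈ N, T₂ v ∈ N) → (∀ v ∈ N, Ti₂ v ∈ N) → (∀ v ∈ N, D₂ v ∈ N) → N = ⊥ ∨ N = ⊤) :
    (∃ e : (M₁ × M₁) ≃ₗ[ℂ] (M₂ × M₂),
      (∀ v : M₁ × M₁, e (T₁ v.1, T₁ v.2) = (T₂ (e v).1, T₂ (e v).2)) ∧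
      (∀ v : M₁ × M₁, e (Ti₁ v.1, Ti₁ v.2) = (Ti₂ (e v).1, Ti₂ (e v).2)) ∧
      (∀ v : M₁ × M₁, e (D₁ v.1, D₁ v.2) = (D₂ (e v).1, D₂ (e v).2)) ∧
      (∀ v : M₁ × M₁, e ((0 : M₁), v.1) = ((0 : M₂), (e v).1)) ∧
      (∀ v : M₁ × M₁, e (v.2, (0 : M₁)) = ((e v).2, (0 : M₂))))
    ↔ (∃ e : M₁ ≃ₗ[ℂ] M₂,
      (∀ v, e (T₁ v) = T₂ (e v)) ∧ (∀ v, e (Ti₁ v) = Ti₂ (e v)) ∧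
      (∀ v, e (D₁ v) = D₂ (e v))) := by
  constructor
  · rintro ⟨e, hT, hTi, hD, hθ, hP⟩
    set f : M₁ →ₗ[ℂ] M₂ :=
      (LinearMap.fst ℂ M₂ M₂).comp ((e : (M₁ × M₁) →ₗ[ℂ] (M₂ × M₂)).comp
        (LinearMap.inl ℂ M₁ M₁)) with hf
    have hfx : ∀ x : M₁, f x = (e (x, 0)).1 := fun x => rfl
    have key : ∀ x y : M₁, e (x, y) = (f x, f y) := by
      intro x y
      have h0 : ∀ z : M₁, e (z, (0:M₁)) = (f z, 0) := by
        intro z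
        have hb := hθ (z, 0)
        -- e (0, z) = (0, f z)
        have ha := hP (0, z)
        -- e (z, 0) = ((e (0,z)).2, 0)
        rw [hb] at ha
        simpa [hfx] using ha
      have h1 : ∀ z : M₁, e ((0:M₁), z) = (0, f z) := by
        intro z
        have hb := hθ (z, 0)
        rw [show (e (z, (0:M₁))) = (f z, 0) from h0 z] at hb
        simpa using hb
      have : e (x, y) = e (x, 0) + e (0, y) := by
        rw [← map_add]; simp
      rw [this, h0, h1]
      simp [Prod.ext_iff]
    have hinj : Function.Injective f := by
      intro a b hab
      have : e (a, (0:M₁)) = e (b, 0) := by rw [key, key, hab]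
      exact (Prod.ext_iff.mp (e.injective this)).1
    have hsurj : Function.Surjective f := by
      intro y
      obtain ⟨v, hv⟩ := e.surjective (y, 0)
      refine ⟨v.1, ?_⟩
      have := key v.1 v.2
      rw [show ((v.1 : M₁), (v.2 : M₁)) = v from rfl, hv] at this
      exact (Prod.ext_iff.mp this.symm).1
    refine ⟨LinearEquiv.ofBijective f ⟨hinj, hsurj⟩, ?_, ?_, ?_⟩
    · intro v
      have := hT (v, 0)
      rw [key, key] at this
      exact (Prod.ext_iff.mp this).1
    · intro v
      have := hTi (v, 0)
      rw [key, key] at this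
      exact (Prod.ext_iff.mp this).1
    · intro v
      have := hD (v, 0)
      rw [key, key] at this
      exact (Prod.ext_iff.mp this).1
  · rintro ⟨e, hT, hTi, hD⟩
    exact ⟨e.prodCongr e, fun v => by simp [hT, Prod.ext_iff],
      fun v => by simp [hTi, Prod.ext_iff],
      fun v => by simp [hD, Prod.ext_iff],
      fun v => by simp [Prod.ext_iff],
      fun v => by simp [Prod.ext_iff]⟩
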